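/- Let (A_i)_{i ∈ ℕ} be a sequence of nonempty sets and 𝒰 a non-principal ultrafilter on ℕ. If for every n ∈ ℕ the set {i : |A_i| > n} belongs to 𝒰, then there is an injection from the Cantor space {0,1}^ℕ into the ultraproduct ∏ A_i / 𝒰; in particular the ultraproduct has cardinality at least 2^ω. -/

import Mathlib

open FirstOrder Language Structure Filter Set Cardinal

universe u v w x


theorem cantor_embeds_in_ultraproduct {A : ℕ → Type u} [∀ i, Nonempty (A i)]
    (u : Ultrafilter ℕ) (hu : (u : Filter ℕ) ≤ Filter.cofinite)
    (h : ∀ n : ℕ, {i : ℕ | (n : Cardinal) < #(A i)} ∈ u) :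
    (∃ f : (ℕ → Bool) → (u : Filter ℕ).Product A, Function.Injective f) ∧
      2 ^ Cardinal.aleph0 ≤ #((u : Filter ℕ).Product A) := by
  classical
  -- P i n : 2^n many elements fit in A i
  set P : ℕ → ℕ → Prop := fun i n => ((2 ^ n : ℕ) : Cardinal) ≤ #(A i) with hP
  have hP0 : ∀ i, P i 0 := by
    intro i
    simpa [hP] using Cardinal.one_le_iff_ne_zero.2 (Cardinal.mk_ne_zero (A i))
  set m : ℕ → ℕ := fun i => Nat.findGreatest (P i) i with hm
  have hPm : ∀ i, P i (m i) := fun i => Nat.findGreatest_spec (Nat.zero_le i) (hP0 i)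
  -- embeddings
  have hemb : ∀ i, Nonempty ((Fin (m i) → Bool) ↪ A i) := by
    intro i
    rw [← Cardinal.lift_mk_le']
    have h1 : Cardinal.lift.{u} #(Fin (m i) → Bool) = ((2 ^ m i : ℕ) : Cardinal.{u}) := by
      rw [Cardinal.mk_fintype, Cardinal.lift_natCast]
      norm_cast
      simp
    rw [h1, Cardinal.lift_id']
    exact hPm i
  set e : (i : ℕ) → ((Fin (m i) → Bool) ↪ A i) := fun i => Classical.choice (hemb i) with he
  set g : (ℕ → Bool) → (i : ℕ) → A i := fun s i => e i (fun j => s j) with hg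
  set f : (ℕ → Bool) → (u : Filter ℕ).Product A :=
    fun s => @Quotient.mk _ ((u : Filter ℕ).productSetoid A) (g s) with hf
  have hinj : Function.Injective f := by
    intro s t hst
    by_contra hne
    obtain ⟨k, hk⟩ : ∃ k, s k ≠ t k := by
      by_contra hc
      push_neg at hc
      exact hne (funext hc)
    have heq : ∀ᶠ i in (u : Filter ℕ), g s i = g t i := Quotient.exact hst
    -- the set where m i > k is in u
    have h1 : {i : ℕ | ((2 ^ (k + 1) : ℕ) : Cardinal) < #(A i)} ∈ u := h (2 ^ (k + 1))
    have h2 : {i : ℕ | k + 1 ≤ i} ∈ u := by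
      apply hu
      rw [Filter.mem_cofinite]
      have : {i : ℕ | k + 1 ≤ i}ᶜ = {i : ℕ | i < k + 1} := by
        ext i; simp [Nat.not_le]
      rw [this]
      exact Set.finite_lt_nat (k + 1)
    have h3 : ∀ᶠ i in (u : Filter ℕ), k < m i := by
      filter_upwards [h1, h2] with i hi1 hi2
      have : k + 1 ≤ m i :=
        Nat.le_findGreatest hi2 (le_of_lt hi1)
      omega
    have h4 : ∀ᶠ i in (u : Filter ℕ), g s i ≠ g t i := by
      filter_upwards [h3] with i hi
      intro hgi
      have := (e i).injective hgi
      have := congrFun this ⟨k, hi⟩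
      exact hk this
    have : ∀ᶠ i in (u : Filter ℕ), False := by
      filter_upwards [heq, h4] with i h1 h2
      exact h2 h1
    have hbot : (u : Filter ℕ) = ⊥ := by simpa using this
    exact (Ultrafilter.neBot u).ne hbot
  refine ⟨⟨f, hinj⟩, ?_⟩
  have hle : Cardinal.lift.{u} #(ℕ → Bool) ≤ Cardinal.lift.{0} #((u : Filter ℕ).Product A) :=
    Cardinal.lift_mk_le'.2 ⟨⟨f, hinj⟩⟩
  have hmk : #(ℕ → Bool) = 2 ^ Cardinal.aleph0 := by
    simp [Cardinal.mk_arrow]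
  rw [hmk] at hle
  simpa [Cardinal.lift_uzero, Cardinal.lift_two_power, Cardinal.lift_aleph0] using hle
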